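/- There exists a universal constant g > 0 (independent of m, n, ℓ, ε, η and of the data A, B, C, D(λ), M(λ)) such that the following holds. Let m, n, ℓ be positive integers, ε, η nonnegative integers with t := max(η,ε) ≥ 1, d := ε+η+1, A ∈ F^{ℓ×ℓ}, B ∈ F^{ℓ×n}, C ∈ F^{m×ℓ}, and D(λ) = Σ_{i=0}^d D_i λ^i an m×n polynomial matrix, defining R(λ) := C(λI_ℓ−A)^{−1}B + D(λ). Let S(λ) be the block Kronecker pencil built from A, B, C and an (η+1)m×(ε+1)n pencil M(λ) satisfying D(λ) = (Λ_η(λ)⊗I_m)ᵀ·M(λ)·(Λ_ε(λ)⊗I_n). Assume max(‖A‖_F, ‖B‖_F, ‖C‖_F, ‖D(λ)‖_F) ≤ 1 and ‖M(λ)‖_F ≤ 1. Define s, f₁, f₂, f₃ as in the context and K := √(2·min(ε+1,η+1))·(1+f₁‖S(λ)‖₂)(1+f₂‖S(λ)‖₂)(1+f₃‖S(λ)‖₂)·‖S(λ)‖_F/‖R(λ)‖_F. Then K ≤ g·t⁵·√(m+n) if both ε > 0 and η > 0, and K ≤ g·t^{9/2}·√(m+n) if ε = 0 or η = 0. -/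

import Mathlib

open Matrix
open scoped Kronecker

noncomputable section

/-- The `k × (k+1)` matrix `E_k = [I_k 0]`. -/
def Ek (𝕜 : Type*) [RCLike 𝕜] (k : ℕ) : Matrix (Fin k) (Fin (k+1)) 𝕜 :=
  Matrix.of fun i j => if (j : ℕ) = (i : ℕ) then 1 else 0

/-- The `k × (k+1)` matrix `F_k = [0 I_k]`. -/
def Fk (𝕜 : Type*) [RCLike 𝕜] (k : ℕ) : Matrix (Fin k) (Fin (k+1)) 𝕜 :=
  Matrix.of fun i j => if (j : ℕ) = (i : ℕ) + 1 then 1 else 0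

/-- The standard unit vector `(0, …, 0, 1)ᵀ` of size `k+1`. -/
def evec (𝕜 : Type*) [RCLike 𝕜] (k : ℕ) : Fin (k+1) → 𝕜 :=
  fun i => if (i : ℕ) = k then 1 else 0

variable {𝕜 : Type*} [RCLike 𝕜]

/-- Frobenius norm of a matrix. -/
def frobNorm {p q : Type*} [Fintype p] [Fintype q] (M : Matrix p q 𝕜) : ℝ :=
  Real.sqrt (∑ i, ∑ j, ‖M i j‖ ^ 2)

/-- Spectral norm (largest singular value) of a matrix. -/
def specNorm {p q : Type*} [Fintype p] [Fintype q] [DecidableEq p] (M : Matrix p q 𝕜) : ℝ :=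
  Real.sqrt (⨆ i, (Matrix.isHermitian_mul_conjTranspose_self M).eigenvalues i)

/-- Smallest singular value of a `p × q` matrix with `p ≤ q`
(the `p`-th largest singular value). -/
def sigmaMin {p q : Type*} [Fintype p] [Fintype q] [DecidableEq p] (M : Matrix p q 𝕜) : ℝ :=
  Real.sqrt (⨅ i, (Matrix.isHermitian_mul_conjTranspose_self M).eigenvalues i)

/-- Euclidean norm of a vector. -/
def vecNorm {q : Type*} [Fintype q] (x : q → 𝕜) : ℝ :=
  Real.sqrt (∑ i, ‖x i‖ ^ 2)

/-- Frobenius norm of the pencil `P.1 - λ • P.2`. -/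
def pFrob {p q : Type*} [Fintype p] [Fintype q] (P : Matrix p q 𝕜 × Matrix p q 𝕜) : ℝ :=
  Real.sqrt (frobNorm P.1 ^ 2 + frobNorm P.2 ^ 2)

/-- Spectral norm of the pencil `P.1 - λ • P.2`. -/
def pSpec {p q : Type*} [Fintype p] [Fintype q] [DecidableEq p]
    (P : Matrix p q 𝕜 × Matrix p q 𝕜) : ℝ :=
  Real.sqrt (specNorm P.1 ^ 2 + specNorm P.2 ^ 2)

/-- A 3×3 block matrix. -/
def blocks3 {R1 R2 R3 C1 C2 C3 : Type*}
    (M11 : Matrix R1 C1 𝕜) (M12 : Matrix R1 C2 𝕜) (M13 : Matrix R1 C3 𝕜)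
    (M21 : Matrix R2 C1 𝕜) (M22 : Matrix R2 C2 𝕜) (M23 : Matrix R2 C3 𝕜)
    (M31 : Matrix R3 C1 𝕜) (M32 : Matrix R3 C2 𝕜) (M33 : Matrix R3 C3 𝕜) :
    Matrix (R1 ⊕ (R2 ⊕ R3)) (C1 ⊕ (C2 ⊕ C3)) 𝕜 :=
  Matrix.fromBlocks M11 (Matrix.fromCols M12 M13) (Matrix.fromRows M21 M31)
    (Matrix.fromBlocks M22 M23 M32 M33)

/-- `K̂₂ᵀ C = (e_{η+1} ⊗ I_m) C`. -/
def colUnit {m ℓ : ℕ} (η : ℕ) (C : Matrix (Fin m) (Fin ℓ) 𝕜) :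
    Matrix (Fin (η+1) × Fin m) (Fin ℓ) 𝕜 :=
  Matrix.of fun i j => evec 𝕜 η i.1 * C i.2 j

/-- `B K̂₁ = B (e_{ε+1}ᵀ ⊗ I_n)`. -/
def rowUnit {n ℓ : ℕ} (ε : ℕ) (B : Matrix (Fin ℓ) (Fin n) 𝕜) :
    Matrix (Fin ℓ) (Fin (ε+1) × Fin n) 𝕜 :=
  Matrix.of fun i j => evec 𝕜 ε j.1 * B i j.2

/-- Row index type of a block Kronecker pencil. -/
abbrev SRow (m ℓ ε η n : ℕ) := (Fin (η+1) × Fin m) ⊕ (Fin ℓ ⊕ (Fin ε × Fin n))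

/-- Column index type of a block Kronecker pencil. -/
abbrev SCol (m ℓ ε η n : ℕ) := (Fin (ε+1) × Fin n) ⊕ (Fin ℓ ⊕ (Fin η × Fin m))

/-- The block Kronecker pencil
`S(λ) = [[M(λ), K̂₂ᵀC, K₂ᵀ(λ)], [BK̂₁, A-λI, 0], [K₁(λ), 0, 0]]`
represented as a pair `(Sa, Sb)` with `S(λ) = Sa - λ Sb`. -/
def blockKron (m n ℓ ε η : ℕ) (A : Matrix (Fin ℓ) (Fin ℓ) 𝕜) (B : Matrix (Fin ℓ) (Fin n) 𝕜)
    (C : Matrix (Fin m) (Fin ℓ) 𝕜)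
    (M : Matrix (Fin (η+1) × Fin m) (Fin (ε+1) × Fin n) 𝕜 ×
         Matrix (Fin (η+1) × Fin m) (Fin (ε+1) × Fin n) 𝕜) :
    Matrix (SRow m ℓ ε η n) (SCol m ℓ ε η n) 𝕜 × Matrix (SRow m ℓ ε η n) (SCol m ℓ ε η n) 𝕜 :=
  (blocks3 M.1 (colUnit η C) ((Ek 𝕜 η)ᵀ ⊗ₖ (1 : Matrix (Fin m) (Fin m) 𝕜))
      (rowUnit ε B) A 0
      (Ek 𝕜 ε ⊗ₖ (1 : Matrix (Fin n) (Fin n) 𝕜)) 0 0,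
   blocks3 M.2 0 ((Fk 𝕜 η)ᵀ ⊗ₖ (1 : Matrix (Fin m) (Fin m) 𝕜))
      0 1 0
      (Fk 𝕜 ε ⊗ₖ (1 : Matrix (Fin n) (Fin n) 𝕜)) 0 0)

/-- Row index type of the matrix `T`. -/
abbrev TRow (m ℓ ε η n : ℕ) :=
  (((Fin η × Fin m) × Fin ℓ) ⊕ ((Fin η × Fin m) × Fin ℓ)) ⊕
  (((Fin ℓ × (Fin ε × Fin n)) ⊕ (Fin ℓ × (Fin ε × Fin n))) ⊕
   (((Fin η × Fin m) × (Fin ε × Fin n)) ⊕ ((Fin η × Fin m) × (Fin ε × Fin n))))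

/-- Column index type of the matrix `T`. -/
abbrev TCol (m ℓ ε η n : ℕ) :=
  (((Fin (η+1) × Fin m) × Fin ℓ) ⊕ ((Fin η × Fin m) × Fin ℓ)) ⊕
  (((Fin ℓ × (Fin ε × Fin n)) ⊕ (Fin ℓ × (Fin (ε+1) × Fin n))) ⊕
   (((Fin (η+1) × Fin m) × (Fin ε × Fin n)) ⊕ ((Fin η × Fin m) × (Fin (ε+1) × Fin n))))

/-- The 6×6 block matrix `T`. -/
def Tmat (m n ℓ ε η : ℕ) (A : Matrix (Fin ℓ) (Fin ℓ) 𝕜) (B : Matrix (Fin ℓ) (Fin n) 𝕜)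
    (C : Matrix (Fin m) (Fin ℓ) 𝕜) : Matrix (TRow m ℓ ε η n) (TCol m ℓ ε η n) 𝕜 :=
  Matrix.fromRows
    (Matrix.fromCols
      (Matrix.fromBlocks
        ((Ek 𝕜 η ⊗ₖ (1 : Matrix (Fin m) (Fin m) 𝕜)) ⊗ₖ (1 : Matrix (Fin ℓ) (Fin ℓ) 𝕜))
        ((1 : Matrix (Fin η × Fin m) (Fin η × Fin m) 𝕜) ⊗ₖ A)
        ((Fk 𝕜 η ⊗ₖ (1 : Matrix (Fin m) (Fin m) 𝕜)) ⊗ₖ (1 : Matrix (Fin ℓ) (Fin ℓ) 𝕜))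
        ((1 : Matrix (Fin η × Fin m) (Fin η × Fin m) 𝕜) ⊗ₖ (1 : Matrix (Fin ℓ) (Fin ℓ) 𝕜)))
      (Matrix.fromCols 0
        (Matrix.fromBlocks 0
          ((1 : Matrix (Fin η × Fin m) (Fin η × Fin m) 𝕜) ⊗ₖ (rowUnit ε B))
          0 0)))
    (Matrix.fromRows
      (Matrix.fromCols 0
        (Matrix.fromCols
          (Matrix.fromBlocks
            (Aᵀ ⊗ₖ (1 : Matrix (Fin ε × Fin n) (Fin ε × Fin n) 𝕜))
            ((1 : Matrix (Fin ℓ) (Fin ℓ) 𝕜) ⊗ₖ (Ek 𝕜 ε ⊗ₖ (1 : Matrix (Fin n) (Fin n) 𝕜)))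
            ((1 : Matrix (Fin ℓ) (Fin ℓ) 𝕜) ⊗ₖ (1 : Matrix (Fin ε × Fin n) (Fin ε × Fin n) 𝕜))
            ((1 : Matrix (Fin ℓ) (Fin ℓ) 𝕜) ⊗ₖ (Fk 𝕜 ε ⊗ₖ (1 : Matrix (Fin n) (Fin n) 𝕜))))
          (Matrix.fromBlocks
            (Matrix.of fun (i : Fin ℓ × (Fin ε × Fin n))
                (j : (Fin (η+1) × Fin m) × (Fin ε × Fin n)) =>
              evec 𝕜 η j.1.1 * C j.1.2 i.1 * (if i.2 = j.2 then 1 else 0))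
            0 0 0)))
      (Matrix.fromCols 0
        (Matrix.fromCols 0
          (Matrix.fromBlocks
            ((Ek 𝕜 η ⊗ₖ (1 : Matrix (Fin m) (Fin m) 𝕜)) ⊗ₖ
              (1 : Matrix (Fin ε × Fin n) (Fin ε × Fin n) 𝕜))
            ((1 : Matrix (Fin η × Fin m) (Fin η × Fin m) 𝕜) ⊗ₖ
              (Ek 𝕜 ε ⊗ₖ (1 : Matrix (Fin n) (Fin n) 𝕜)))
            ((Fk 𝕜 η ⊗ₖ (1 : Matrix (Fin m) (Fin m) 𝕜)) ⊗ₖ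
              (1 : Matrix (Fin ε × Fin n) (Fin ε × Fin n) 𝕜))
            ((1 : Matrix (Fin η × Fin m) (Fin η × Fin m) 𝕜) ⊗ₖ
              (Fk 𝕜 ε ⊗ₖ (1 : Matrix (Fin n) (Fin n) 𝕜)))))))

/-- The 6×6 block matrix `ΔT` built from the blocks of the perturbation pencil. -/
def DeltaT (m n ℓ ε η : ℕ)
    (Δ12a Δ12b : Matrix (Fin (η+1) × Fin m) (Fin ℓ) 𝕜)
    (Δ13a Δ13b : Matrix (Fin (η+1) × Fin m) (Fin η × Fin m) 𝕜)
    (Δ21a Δ21b : Matrix (Fin ℓ) (Fin (ε+1) × Fin n) 𝕜)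
    (Δ22a Δ22b : Matrix (Fin ℓ) (Fin ℓ) 𝕜)
    (Δ23a Δ23b : Matrix (Fin ℓ) (Fin η × Fin m) 𝕜)
    (Δ31a Δ31b : Matrix (Fin ε × Fin n) (Fin (ε+1) × Fin n) 𝕜)
    (Δ32a Δ32b : Matrix (Fin ε × Fin n) (Fin ℓ) 𝕜) :
    Matrix (TRow m ℓ ε η n) (TCol m ℓ ε η n) 𝕜 :=
  Matrix.fromRows
    (Matrix.fromCols
      (Matrix.fromBlocks
        (Δ13aᵀ ⊗ₖ (1 : Matrix (Fin ℓ) (Fin ℓ) 𝕜))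
        ((1 : Matrix (Fin η × Fin m) (Fin η × Fin m) 𝕜) ⊗ₖ Δ22a)
        (Δ13bᵀ ⊗ₖ (1 : Matrix (Fin ℓ) (Fin ℓ) 𝕜))
        ((1 : Matrix (Fin η × Fin m) (Fin η × Fin m) 𝕜) ⊗ₖ Δ22b))
      (Matrix.fromCols 0
        (Matrix.fromBlocks 0 ((1 : Matrix (Fin η × Fin m) (Fin η × Fin m) 𝕜) ⊗ₖ Δ21a)
          0 ((1 : Matrix (Fin η × Fin m) (Fin η × Fin m) 𝕜) ⊗ₖ Δ21b))))
    (Matrix.fromRows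
      (Matrix.fromCols 0
        (Matrix.fromCols
          (Matrix.fromBlocks
            (Δ22aᵀ ⊗ₖ (1 : Matrix (Fin ε × Fin n) (Fin ε × Fin n) 𝕜))
            ((1 : Matrix (Fin ℓ) (Fin ℓ) 𝕜) ⊗ₖ Δ31a)
            (Δ22bᵀ ⊗ₖ (1 : Matrix (Fin ε × Fin n) (Fin ε × Fin n) 𝕜))
            ((1 : Matrix (Fin ℓ) (Fin ℓ) 𝕜) ⊗ₖ Δ31b))
          (Matrix.fromBlocks
            (Δ12aᵀ ⊗ₖ (1 : Matrix (Fin ε × Fin n) (Fin ε × Fin n) 𝕜)) 0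
            (Δ12bᵀ ⊗ₖ (1 : Matrix (Fin ε × Fin n) (Fin ε × Fin n) 𝕜)) 0)))
      (Matrix.fromCols
        (Matrix.fromBlocks 0 ((1 : Matrix (Fin η × Fin m) (Fin η × Fin m) 𝕜) ⊗ₖ Δ32a)
          0 ((1 : Matrix (Fin η × Fin m) (Fin η × Fin m) 𝕜) ⊗ₖ Δ32b))
        (Matrix.fromCols
          (Matrix.fromBlocks
            (Δ23aᵀ ⊗ₖ (1 : Matrix (Fin ε × Fin n) (Fin ε × Fin n) 𝕜)) 0
            (Δ23bᵀ ⊗ₖ (1 : Matrix (Fin ε × Fin n) (Fin ε × Fin n) 𝕜)) 0)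
          (Matrix.fromBlocks
            (Δ13aᵀ ⊗ₖ (1 : Matrix (Fin ε × Fin n) (Fin ε × Fin n) 𝕜))
            ((1 : Matrix (Fin η × Fin m) (Fin η × Fin m) 𝕜) ⊗ₖ Δ31a)
            (Δ13bᵀ ⊗ₖ (1 : Matrix (Fin ε × Fin n) (Fin ε × Fin n) 𝕜))
            ((1 : Matrix (Fin η × Fin m) (Fin η × Fin m) 𝕜) ⊗ₖ Δ31b)))))

/-- `(Λ_k(x) ⊗ I_m)` where `Λ_k(x) = (x^k, …, x, 1)ᵀ`. -/
def LamI (𝕜 : Type*) [RCLike 𝕜] (k m : ℕ) (x : 𝕜) :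
    Matrix (Fin (k+1) × Fin m) (Fin m) 𝕜 :=
  Matrix.of fun i j => if i.2 = j then x ^ (k - (i.1 : ℕ)) else 0

/-- `(A, B)` is controllable if the controllability matrix `[B, AB, …, A^{ℓ-1}B]`
has full rank `ℓ`. -/
def Controllable {ℓ n : ℕ} (A : Matrix (Fin ℓ) (Fin ℓ) 𝕜)
    (B : Matrix (Fin ℓ) (Fin n) 𝕜) : Prop :=
  (Matrix.of fun (i : Fin ℓ) (p : Fin ℓ × Fin n) => (A ^ (p.1 : ℕ) * B) i p.2).rank = ℓ

/-- `(A, C)` is observable if `(Aᵀ, Cᵀ)` is controllable. -/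
def Observable {ℓ m : ℕ} (A : Matrix (Fin ℓ) (Fin ℓ) 𝕜)
    (C : Matrix (Fin m) (Fin ℓ) 𝕜) : Prop :=
  Controllable Aᵀ Cᵀ

end


-- ===================== auxiliary lemmas =====================
noncomputable section
namespace S18
open Matrix
open scoped Kronecker

variable {𝕜 : Type*} [RCLike 𝕜]

lemma sumSq_nonneg {q : Type*} [Fintype q] (x : q → 𝕜) : 0 ≤ ∑ i, ‖x i‖^2 :=
  Finset.sum_nonneg fun _ _ => sq_nonneg _

lemma frobSq_nonneg {p q : Type*} [Fintype p] [Fintype q] (M : Matrix p q 𝕜) :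
    0 ≤ ∑ i, ∑ j, ‖M i j‖^2 :=
  Finset.sum_nonneg fun _ _ => sumSq_nonneg _

lemma vecNorm_nonneg {q : Type*} [Fintype q] (x : q → 𝕜) : 0 ≤ vecNorm x := Real.sqrt_nonneg _

lemma frobNorm_nonneg {p q : Type*} [Fintype p] [Fintype q] (M : Matrix p q 𝕜) :
    0 ≤ frobNorm M := Real.sqrt_nonneg _

lemma vecNorm_sq {q : Type*} [Fintype q] (x : q → 𝕜) : vecNorm x ^ 2 = ∑ i, ‖x i‖^2 :=
  Real.sq_sqrt (sumSq_nonneg x)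

lemma frobNorm_sq {p q : Type*} [Fintype p] [Fintype q] (M : Matrix p q 𝕜) :
    frobNorm M ^ 2 = ∑ i, ∑ j, ‖M i j‖^2 :=
  Real.sq_sqrt (frobSq_nonneg M)

lemma frobSq_le_one {p q : Type*} [Fintype p] [Fintype q] {M : Matrix p q 𝕜}
    (h : frobNorm M ≤ 1) : ∑ i, ∑ j, ‖M i j‖^2 ≤ 1 := by
  have h2 := frobNorm_sq M
  nlinarith [frobNorm_nonneg M]

lemma vecNorm_eq_norm {q : Type*} [Fintype q] (x : q → 𝕜) :
    vecNorm x = ‖(WithLp.equiv 2 (q → 𝕜)).symm x‖ := by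
  rw [EuclideanSpace.norm_eq]; simp [vecNorm]

lemma vecNorm_add_le {q : Type*} [Fintype q] (x y : q → 𝕜) :
    vecNorm (x + y) ≤ vecNorm x + vecNorm y := by
  rw [vecNorm_eq_norm, vecNorm_eq_norm, vecNorm_eq_norm]
  exact norm_add_le ((WithLp.equiv 2 (q → 𝕜)).symm x) ((WithLp.equiv 2 (q → 𝕜)).symm y)

lemma vecNorm_smul_real {q : Type*} [Fintype q] (c : ℝ) (x : q → 𝕜) :
    vecNorm (c • x) = |c| * vecNorm x := by
  simp only [vecNorm, Pi.smul_apply, norm_smul, Real.norm_eq_abs, mul_pow]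
  rw [← Finset.mul_sum, Real.sqrt_mul (sq_nonneg |c|), Real.sqrt_sq_eq_abs, abs_abs]

/-- operator-norm-squared bound predicate -/
def ob {p q : Type*} [Fintype p] [Fintype q] (M : Matrix p q 𝕜) (c : ℝ) : Prop :=
  ∀ x, vecNorm (M *ᵥ x) ^ 2 ≤ c * vecNorm x ^ 2

lemma ob_mono {p q : Type*} [Fintype p] [Fintype q] {M : Matrix p q 𝕜} {c c' : ℝ}
    (h : ob M c) (hcc : c ≤ c') : ob M c' := fun x => (h x).trans <| by
  have := sq_nonneg (vecNorm x); nlinarith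

lemma ob_zero {p q : Type*} [Fintype p] [Fintype q] {c : ℝ} (hc : 0 ≤ c) :
    ob (0 : Matrix p q 𝕜) c := fun x => by
  simp [Matrix.zero_mulVec, vecNorm]
  positivity

lemma ob_one {p : Type*} [Fintype p] [DecidableEq p] : ob (1 : Matrix p p 𝕜) 1 := fun x => by
  rw [Matrix.one_mulVec, one_mul]

lemma ob_frobSq {p q : Type*} [Fintype p] [Fintype q] (M : Matrix p q 𝕜) :
    ob M (∑ i, ∑ j, ‖M i j‖^2) := by
  intro x
  rw [vecNorm_sq, vecNorm_sq, Finset.sum_mul]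
  refine Finset.sum_le_sum fun i _ => ?_
  calc ‖(M *ᵥ x) i‖ ^ 2 = ‖∑ j, M i j * x j‖^2 := rfl
    _ ≤ (∑ j, ‖M i j‖ * ‖x j‖)^2 := by
        have h1 : ‖∑ j, M i j * x j‖ ≤ ∑ j, ‖M i j‖ * ‖x j‖ := by
          refine (norm_sum_le _ _).trans ?_
          exact Finset.sum_le_sum fun j _ => by rw [norm_mul]
        have h2 : (0:ℝ) ≤ ‖∑ j, M i j * x j‖ := norm_nonneg _
        nlinarith
    _ ≤ (∑ j, ‖M i j‖^2) * (∑ j, ‖x j‖^2) :=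
        Finset.sum_mul_sq_le_sq_mul_sq _ _ _

lemma re_star_dot {q : Type*} [Fintype q] (x : q → 𝕜) :
    RCLike.re (star x ⬝ᵥ x) = vecNorm x ^ 2 := by
  rw [vecNorm_sq, dotProduct, map_sum]
  refine Finset.sum_congr rfl fun i _ => ?_
  simp only [Pi.star_apply]
  rw [RCLike.star_def, RCLike.conj_mul, ← RCLike.ofReal_pow, RCLike.ofReal_re]

lemma specNorm_le_of_ob {p q : Type*} [Fintype p] [Fintype q] [DecidableEq p]
    (M : Matrix p q 𝕜) {c : ℝ} (hc : 0 ≤ c) (h : ob M c) : specNorm M ≤ Real.sqrt c := by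
  rw [specNorm]
  apply Real.sqrt_le_sqrt
  cases isEmpty_or_nonempty p with
  | inl hp =>
    haveI := hp
    rw [Real.iSup_of_isEmpty]; exact hc
  | inr hp =>
    apply ciSup_le
    intro i
    set hH := Matrix.isHermitian_mul_conjTranspose_self M with hHdef
    set lam := hH.eigenvalues i with hlam
    set v : p → 𝕜 := ⇑(hH.eigenvectorBasis i) with hv
    have heig : (M * Mᴴ) *ᵥ v = lam • v := hH.mulVec_eigenvectorBasis i
    have hlam0 : 0 ≤ lam := Matrix.eigenvalues_self_mul_conjTranspose_nonneg M i
    have hv1 : vecNorm v = 1 := by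
      have := hH.eigenvectorBasis.orthonormal.1 i
      rw [EuclideanSpace.norm_eq] at this
      simpa [vecNorm, hv] using this
    have hw : vecNorm (Mᴴ *ᵥ v) ^ 2 = lam := by
      rw [← re_star_dot]
      have h1 : star (Mᴴ *ᵥ v) ⬝ᵥ (Mᴴ *ᵥ v) = star v ⬝ᵥ ((M * Mᴴ) *ᵥ v) := by
        rw [Matrix.star_mulVec, Matrix.conjTranspose_conjTranspose,
          ← Matrix.dotProduct_mulVec, Matrix.mulVec_mulVec]
      rw [h1, heig]
      have h2 : star v ⬝ᵥ (lam • v) = (lam : 𝕜) • (star v ⬝ᵥ v) := by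
        rw [RCLike.real_smul_eq_coe_smul (K := 𝕜) lam v, dotProduct_smul]
      rw [h2]
      simp only [smul_eq_mul]
      rw [RCLike.re_ofReal_mul, re_star_dot, hv1]
      simp
    have hlamval : vecNorm (M *ᵥ (Mᴴ *ᵥ v)) = lam := by
      rw [Matrix.mulVec_mulVec, heig, vecNorm_smul_real, abs_of_nonneg hlam0, hv1, mul_one]
    have hb := h (Mᴴ *ᵥ v)
    rw [hlamval, hw] at hb
    nlinarith

lemma specNorm_nonneg {p q : Type*} [Fintype p] [Fintype q] [DecidableEq p]
    (M : Matrix p q 𝕜) : 0 ≤ specNorm M := Real.sqrt_nonneg _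

lemma specNorm_le_frobNorm {p q : Type*} [Fintype p] [Fintype q] [DecidableEq p]
    (M : Matrix p q 𝕜) : specNorm M ≤ frobNorm M :=
  specNorm_le_of_ob M (frobSq_nonneg M) (ob_frobSq M)

-- block combination lemmas
lemma vecNormSq_sum_elim {p q : Type*} [Fintype p] [Fintype q] (x : p → 𝕜) (y : q → 𝕜) :
    vecNorm (Sum.elim x y) ^ 2 = vecNorm x ^ 2 + vecNorm y ^ 2 := by
  simp [vecNorm_sq, Fintype.sum_sum_type]

lemma vecNormSq_decomp {p q : Type*} [Fintype p] [Fintype q] (x : p ⊕ q → 𝕜) :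
    vecNorm x ^ 2 = vecNorm (x ∘ Sum.inl) ^ 2 + vecNorm (x ∘ Sum.inr) ^ 2 := by
  simp [vecNorm_sq, Fintype.sum_sum_type]

lemma vecNormSq_add_le {q : Type*} [Fintype q] (u v : q → 𝕜) :
    vecNorm (u + v) ^ 2 ≤ 2 * vecNorm u ^ 2 + 2 * vecNorm v ^ 2 := by
  have h := vecNorm_add_le u v
  have hs : 0 ≤ vecNorm u + vecNorm v := add_nonneg (vecNorm_nonneg u) (vecNorm_nonneg v)
  have h2 := mul_le_mul h h (vecNorm_nonneg (u+v)) hs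
  nlinarith [sq_nonneg (vecNorm u - vecNorm v)]

lemma ob_fromRows {p₁ p₂ q : Type*} [Fintype p₁] [Fintype p₂] [Fintype q]
    {A : Matrix p₁ q 𝕜} {B : Matrix p₂ q 𝕜} {a b : ℝ}
    (hA : ob A a) (hB : ob B b) : ob (Matrix.fromRows A B) (a + b) := by
  intro x
  rw [Matrix.fromRows_mulVec, vecNormSq_sum_elim]
  have := hA x; have := hB x; nlinarith

lemma ob_fromColumns {p q₁ q₂ : Type*} [Fintype p] [Fintype q₁] [Fintype q₂]
    {A : Matrix p q₁ 𝕜} {B : Matrix p q₂ 𝕜} {a b : ℝ} (ha : 0 ≤ a) (hb : 0 ≤ b)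
    (hA : ob A a) (hB : ob B b) : ob (Matrix.fromCols A B) (2*(a + b)) := by
  intro x
  rw [← Sum.elim_comp_inl_inr x, Matrix.fromCols_mulVec_sumElim, vecNormSq_sum_elim]
  have h1 := hA (x ∘ Sum.inl); have h2 := hB (x ∘ Sum.inr)
  have h3 := vecNormSq_add_le (A *ᵥ (x ∘ Sum.inl)) (B *ᵥ (x ∘ Sum.inr))
  have n1 := vecNorm_nonneg (x ∘ Sum.inl); have n2 := vecNorm_nonneg (x ∘ Sum.inr)
  nlinarith

lemma ob_fromBlocks {p₁ p₂ q₁ q₂ : Type*} [Fintype p₁] [Fintype p₂] [Fintype q₁] [Fintype q₂]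
    {A : Matrix p₁ q₁ 𝕜} {B : Matrix p₁ q₂ 𝕜} {C : Matrix p₂ q₁ 𝕜} {D : Matrix p₂ q₂ 𝕜}
    {a b c d : ℝ} (ha : 0 ≤ a) (hb : 0 ≤ b) (hc : 0 ≤ c) (hd : 0 ≤ d)
    (hA : ob A a) (hB : ob B b) (hC : ob C c) (hD : ob D d) :
    ob (Matrix.fromBlocks A B C D) (2*(a + b + c + d)) := by
  intro x
  rw [Matrix.fromBlocks_mulVec, vecNormSq_sum_elim, vecNormSq_decomp x]
  have h1 := hA (x ∘ Sum.inl); have h2 := hB (x ∘ Sum.inr)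
  have h3 := hC (x ∘ Sum.inl); have h4 := hD (x ∘ Sum.inr)
  have h5 := vecNormSq_add_le (A *ᵥ (x ∘ Sum.inl)) (B *ᵥ (x ∘ Sum.inr))
  have h6 := vecNormSq_add_le (C *ᵥ (x ∘ Sum.inl)) (D *ᵥ (x ∘ Sum.inr))
  have n1 := vecNorm_nonneg (x ∘ Sum.inl); have n2 := vecNorm_nonneg (x ∘ Sum.inr)
  nlinarith

lemma ob_blocks3 {R1 R2 R3 C1 C2 C3 : Type*}
    [Fintype R1] [Fintype R2] [Fintype R3] [Fintype C1] [Fintype C2] [Fintype C3]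
    {M11 : Matrix R1 C1 𝕜} {M12 : Matrix R1 C2 𝕜} {M13 : Matrix R1 C3 𝕜}
    {M21 : Matrix R2 C1 𝕜} {M22 : Matrix R2 C2 𝕜} {M23 : Matrix R2 C3 𝕜}
    {M31 : Matrix R3 C1 𝕜} {M32 : Matrix R3 C2 𝕜} {M33 : Matrix R3 C3 𝕜}
    {c11 c12 c13 c21 c22 c23 c31 c32 c33 : ℝ}
    (n11 : 0 ≤ c11) (n12 : 0 ≤ c12) (n13 : 0 ≤ c13) (n21 : 0 ≤ c21) (n22 : 0 ≤ c22)
    (n23 : 0 ≤ c23) (n31 : 0 ≤ c31) (n32 : 0 ≤ c32) (n33 : 0 ≤ c33)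
    (h11 : ob M11 c11) (h12 : ob M12 c12) (h13 : ob M13 c13)
    (h21 : ob M21 c21) (h22 : ob M22 c22) (h23 : ob M23 c23)
    (h31 : ob M31 c31) (h32 : ob M32 c32) (h33 : ob M33 c33) :
    ob (blocks3 M11 M12 M13 M21 M22 M23 M31 M32 M33)
      (2*(c11 + 2*(c12 + c13) + (c21 + c31) + 2*(c22 + c23 + c32 + c33))) := by
  have hcols := ob_fromColumns n12 n13 h12 h13
  have hrows := ob_fromRows h21 h31
  have hblk := ob_fromBlocks n22 n23 n32 n33 h22 h23 h32 h33
  exact ob_fromBlocks n11 (by linarith) (by linarith) (by linarith) h11 hcols hrows hblk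

-- selection matrices
lemma selection_facts {p q : Type*} [Fintype p] [Fintype q] [DecidableEq p] [DecidableEq q]
    (M : Matrix p q 𝕜) (g : p → Option q)
    (hM : ∀ i j, M i j = if g i = some j then 1 else 0)
    (hg : ∀ i₁ i₂ j, g i₁ = some j → g i₂ = some j → i₁ = i₂) :
    ob M 1 ∧ ∀ i, ∑ j, ‖M i j‖^2 ≤ 1 := by
  have hval : ∀ x : q → 𝕜, ∀ i, (M *ᵥ x) i = (g i).elim 0 x := by
    intro x i
    cases hgi : g i with
    | none => simp [Matrix.mulVec, dotProduct, hM, hgi]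
    | some j =>
      simp only [Matrix.mulVec, dotProduct, hM, hgi, Option.elim]
      simp [Option.some.injEq, Finset.sum_ite_eq]
  constructor
  · intro x
    rw [vecNorm_sq, vecNorm_sq, one_mul]
    calc ∑ i, ‖(M *ᵥ x) i‖^2 = ∑ i, (g i).elim 0 (fun j => ‖x j‖^2) := by
          refine Finset.sum_congr rfl fun i _ => ?_
          rw [hval x i]
          cases g i <;> simp
      _ = ∑ i, ∑ j, (if g i = some j then ‖x j‖^2 else 0) := by
          refine Finset.sum_congr rfl fun i _ => ?_
          cases hgi : g i with
          | none => simp [hgi]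
          | some j => simp [hgi, Finset.sum_ite_eq]
      _ = ∑ j, ∑ i, (if g i = some j then ‖x j‖^2 else 0) := Finset.sum_comm
      _ ≤ ∑ j, ‖x j‖^2 := by
          refine Finset.sum_le_sum fun j _ => ?_
          rw [← Finset.sum_filter, Finset.sum_const, nsmul_eq_mul]
          have hcard : (Finset.univ.filter (fun i => g i = some j)).card ≤ 1 := by
            refine Finset.card_le_one.mpr fun i₁ h₁ i₂ h₂ => ?_
            exact hg i₁ i₂ j (Finset.mem_filter.mp h₁).2 (Finset.mem_filter.mp h₂).2
          have hx : (0:ℝ) ≤ ‖x j‖^2 := sq_nonneg _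
          calc ((Finset.univ.filter (fun i => g i = some j)).card : ℝ) * ‖x j‖^2
              ≤ 1 * ‖x j‖^2 := by
                apply mul_le_mul_of_nonneg_right _ hx
                exact_mod_cast hcard
            _ = ‖x j‖^2 := one_mul _
  · intro i
    calc ∑ j, ‖M i j‖^2 = ∑ j, (if g i = some j then (1:ℝ) else 0) := by
          refine Finset.sum_congr rfl fun j _ => ?_
          rw [hM]; split <;> simp
      _ ≤ 1 := by
          cases hgi : g i with
          | none => simp [hgi]
          | some j => simp [hgi, Finset.sum_ite_eq]

lemma rows_to_frobSq {p q : Type*} [Fintype p] [Fintype q] {M : Matrix p q 𝕜}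
    (h : ∀ i, ∑ j, ‖M i j‖^2 ≤ 1) :
    ∑ i, ∑ j, ‖M i j‖^2 ≤ (Fintype.card p : ℝ) := by
  calc ∑ i, ∑ j, ‖M i j‖^2 ≤ ∑ _i : p, (1:ℝ) := Finset.sum_le_sum fun i _ => h i
    _ = (Fintype.card p : ℝ) := by simp

lemma entry_EkT (k w : ℕ) (i : Fin (k+1) × Fin w) (j : Fin k × Fin w) :
    ((Ek 𝕜 k)ᵀ ⊗ₖ (1 : Matrix (Fin w) (Fin w) 𝕜)) i j =
      if (if h : (i.1 : ℕ) < k then some ((⟨i.1, h⟩ : Fin k), i.2) else none) = some j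
      then 1 else 0 := by
  obtain ⟨i1, i2⟩ := i; obtain ⟨j1, j2⟩ := j
  simp only [Matrix.kroneckerMap_apply, Matrix.transpose_apply, Ek, Matrix.of_apply,
    Matrix.one_apply]
  by_cases h : (i1 : ℕ) < k
  · rw [dif_pos h]
    by_cases hij : (i1 : ℕ) = (j1 : ℕ)
    · have h1 : (⟨(i1 : ℕ), h⟩ : Fin k) = j1 := Fin.ext hij
      by_cases hab : i2 = j2
      · simp [hij, hab, h1, Prod.ext_iff]
      · simp [hij, hab, Prod.ext_iff]
    · have h1 : (⟨(i1 : ℕ), h⟩ : Fin k) ≠ j1 := fun hc => hij (congrArg Fin.val hc)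
      simp [hij, h1, Prod.ext_iff]
  · rw [dif_neg h]
    have h1 : ¬ (i1 : ℕ) = (j1 : ℕ) := by have := j1.isLt; omega
    simp [h1]

lemma sel_EkT (k w : ℕ) :
    ob ((Ek 𝕜 k)ᵀ ⊗ₖ (1 : Matrix (Fin w) (Fin w) 𝕜)) 1 ∧
    ∀ i, ∑ j, ‖((Ek 𝕜 k)ᵀ ⊗ₖ (1 : Matrix (Fin w) (Fin w) 𝕜)) i j‖^2 ≤ 1 := by
  refine selection_facts _ (fun p => if h : (p.1 : ℕ) < k then some ((⟨p.1, h⟩ : Fin k), p.2)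
    else none) (fun i j => entry_EkT k w i j) ?_
  rintro ⟨i1, i2⟩ ⟨i1', i2'⟩ ⟨j1, j2⟩ h₁ h₂
  dsimp only at h₁ h₂
  by_cases h : (i1 : ℕ) < k
  · rw [dif_pos h] at h₁
    by_cases h' : (i1' : ℕ) < k
    · rw [dif_pos h'] at h₂
      simp only [Option.some.injEq, Prod.mk.injEq] at h₁ h₂
      obtain ⟨ha, hb⟩ := h₁; obtain ⟨ha', hb'⟩ := h₂
      have : (i1 : ℕ) = (i1' : ℕ) := by
        have e1 := congrArg Fin.val ha; have e2 := congrArg Fin.val ha'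
        simp at e1 e2; omega
      exact Prod.ext (Fin.ext this) (hb.trans hb'.symm)
    · rw [dif_neg h'] at h₂; exact absurd h₂ (by simp)
  · rw [dif_neg h] at h₁; exact absurd h₁ (by simp)

lemma entry_FkT (k w : ℕ) (i : Fin (k+1) × Fin w) (j : Fin k × Fin w) :
    ((Fk 𝕜 k)ᵀ ⊗ₖ (1 : Matrix (Fin w) (Fin w) 𝕜)) i j =
      if (if h : 0 < (i.1 : ℕ) then some ((⟨(i.1 : ℕ) - 1, by have := i.1.isLt; omega⟩ : Fin k),
          i.2) else none) = some j
      then 1 else 0 := by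
  obtain ⟨i1, i2⟩ := i; obtain ⟨j1, j2⟩ := j
  simp only [Matrix.kroneckerMap_apply, Matrix.transpose_apply, Fk, Matrix.of_apply,
    Matrix.one_apply]
  by_cases h : 0 < (i1 : ℕ)
  · rw [dif_pos h]
    by_cases hij : (i1 : ℕ) = (j1 : ℕ) + 1
    · have h1 : (⟨(i1 : ℕ) - 1, by have := i1.isLt; omega⟩ : Fin k) = j1 :=
        Fin.ext (by simp; omega)
      by_cases hab : i2 = j2
      · simp [hij, hab, h1, Prod.ext_iff]
      · simp [hij, hab, Prod.ext_iff]
    · have h1 : (⟨(i1 : ℕ) - 1, by have := i1.isLt; omega⟩ : Fin k) ≠ j1 := by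
        intro hc
        have := congrArg Fin.val hc
        simp at this
        omega
      simp [hij, h1, Prod.ext_iff]
  · rw [dif_neg h]
    have h1 : ¬ (i1 : ℕ) = (j1 : ℕ) + 1 := by omega
    simp [h1]

lemma sel_FkT (k w : ℕ) :
    ob ((Fk 𝕜 k)ᵀ ⊗ₖ (1 : Matrix (Fin w) (Fin w) 𝕜)) 1 ∧
    ∀ i, ∑ j, ‖((Fk 𝕜 k)ᵀ ⊗ₖ (1 : Matrix (Fin w) (Fin w) 𝕜)) i j‖^2 ≤ 1 := by
  refine selection_facts _ (fun p => if h : 0 < (p.1 : ℕ) then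
    some ((⟨(p.1 : ℕ) - 1, by have := p.1.isLt; omega⟩ : Fin k), p.2) else none)
    (fun i j => entry_FkT k w i j) ?_
  rintro ⟨i1, i2⟩ ⟨i1', i2'⟩ ⟨j1, j2⟩ h₁ h₂
  dsimp only at h₁ h₂
  by_cases h : 0 < (i1 : ℕ)
  · rw [dif_pos h] at h₁
    by_cases h' : 0 < (i1' : ℕ)
    · rw [dif_pos h'] at h₂
      simp only [Option.some.injEq, Prod.mk.injEq] at h₁ h₂
      obtain ⟨ha, hb⟩ := h₁; obtain ⟨ha', hb'⟩ := h₂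
      have : (i1 : ℕ) = (i1' : ℕ) := by
        have e1 := congrArg Fin.val ha; have e2 := congrArg Fin.val ha'
        simp at e1 e2; omega
      exact Prod.ext (Fin.ext this) (hb.trans hb'.symm)
    · rw [dif_neg h'] at h₂; exact absurd h₂ (by simp)
  · rw [dif_neg h] at h₁; exact absurd h₁ (by simp)

lemma entry_Ek (k w : ℕ) (i : Fin k × Fin w) (j : Fin (k+1) × Fin w) :
    ((Ek 𝕜 k) ⊗ₖ (1 : Matrix (Fin w) (Fin w) 𝕜)) i j =
      if some ((Fin.castSucc i.1), i.2) = some j then 1 else 0 := by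
  obtain ⟨i1, i2⟩ := i; obtain ⟨j1, j2⟩ := j
  simp only [Matrix.kroneckerMap_apply, Ek, Matrix.of_apply, Matrix.one_apply]
  by_cases hij : (j1 : ℕ) = (i1 : ℕ)
  · have h1 : Fin.castSucc i1 = j1 := Fin.ext (by simp [hij])
    by_cases hab : i2 = j2
    · simp [hij, hab, h1, Prod.ext_iff]
    · simp [hij, hab, Prod.ext_iff]
  · have h1 : ¬ (Fin.castSucc i1 = j1) := fun hc => hij (by rw [← hc]; simp)
    simp [hij, h1, Prod.ext_iff]

lemma sel_Ek (k w : ℕ) :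
    ob ((Ek 𝕜 k) ⊗ₖ (1 : Matrix (Fin w) (Fin w) 𝕜)) 1 ∧
    ∀ i, ∑ j, ‖((Ek 𝕜 k) ⊗ₖ (1 : Matrix (Fin w) (Fin w) 𝕜)) i j‖^2 ≤ 1 := by
  refine selection_facts _ (fun p => some ((Fin.castSucc p.1), p.2))
    (fun i j => entry_Ek k w i j) ?_
  rintro ⟨i1, i2⟩ ⟨i1', i2'⟩ ⟨j1, j2⟩ h₁ h₂
  dsimp only at h₁ h₂
  simp only [Option.some.injEq, Prod.mk.injEq] at h₁ h₂
  obtain ⟨ha, hb⟩ := h₁; obtain ⟨ha', hb'⟩ := h₂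
  have : (i1 : ℕ) = (i1' : ℕ) := by
    have e1 := congrArg Fin.val ha; have e2 := congrArg Fin.val ha'
    simp at e1 e2; omega
  exact Prod.ext (Fin.ext this) (hb.trans hb'.symm)

lemma entry_Fk (k w : ℕ) (i : Fin k × Fin w) (j : Fin (k+1) × Fin w) :
    ((Fk 𝕜 k) ⊗ₖ (1 : Matrix (Fin w) (Fin w) 𝕜)) i j =
      if some ((Fin.succ i.1), i.2) = some j then 1 else 0 := by
  obtain ⟨i1, i2⟩ := i; obtain ⟨j1, j2⟩ := j
  simp only [Matrix.kroneckerMap_apply, Fk, Matrix.of_apply, Matrix.one_apply]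
  by_cases hij : (j1 : ℕ) = (i1 : ℕ) + 1
  · have h1 : Fin.succ i1 = j1 := Fin.ext (by simp [hij])
    by_cases hab : i2 = j2
    · simp [hij, hab, h1, Prod.ext_iff]
    · simp [hij, hab, Prod.ext_iff]
  · have h1 : ¬ (Fin.succ i1 = j1) := fun hc => hij (by rw [← hc]; simp)
    simp [hij, h1, Prod.ext_iff]

lemma sel_Fk (k w : ℕ) :
    ob ((Fk 𝕜 k) ⊗ₖ (1 : Matrix (Fin w) (Fin w) 𝕜)) 1 ∧
    ∀ i, ∑ j, ‖((Fk 𝕜 k) ⊗ₖ (1 : Matrix (Fin w) (Fin w) 𝕜)) i j‖^2 ≤ 1 := by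
  refine selection_facts _ (fun p => some ((Fin.succ p.1), p.2))
    (fun i j => entry_Fk k w i j) ?_
  rintro ⟨i1, i2⟩ ⟨i1', i2'⟩ ⟨j1, j2⟩ h₁ h₂
  dsimp only at h₁ h₂
  simp only [Option.some.injEq, Prod.mk.injEq] at h₁ h₂
  obtain ⟨ha, hb⟩ := h₁; obtain ⟨ha', hb'⟩ := h₂
  have : (i1 : ℕ) = (i1' : ℕ) := by
    have e1 := congrArg Fin.val ha; have e2 := congrArg Fin.val ha'
    simp at e1 e2; omega
  exact Prod.ext (Fin.ext this) (hb.trans hb'.symm)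

-- frobenius square computations
lemma frobSq_blocks3 {R1 R2 R3 C1 C2 C3 : Type*}
    [Fintype R1] [Fintype R2] [Fintype R3] [Fintype C1] [Fintype C2] [Fintype C3]
    (M11 : Matrix R1 C1 𝕜) (M12 : Matrix R1 C2 𝕜) (M13 : Matrix R1 C3 𝕜)
    (M21 : Matrix R2 C1 𝕜) (M22 : Matrix R2 C2 𝕜) (M23 : Matrix R2 C3 𝕜)
    (M31 : Matrix R3 C1 𝕜) (M32 : Matrix R3 C2 𝕜) (M33 : Matrix R3 C3 𝕜) :
    ∑ i, ∑ j, ‖blocks3 M11 M12 M13 M21 M22 M23 M31 M32 M33 i j‖^2 =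
      (∑ i, ∑ j, ‖M11 i j‖^2) + (∑ i, ∑ j, ‖M12 i j‖^2) + (∑ i, ∑ j, ‖M13 i j‖^2) +
      (∑ i, ∑ j, ‖M21 i j‖^2) + (∑ i, ∑ j, ‖M22 i j‖^2) + (∑ i, ∑ j, ‖M23 i j‖^2) +
      (∑ i, ∑ j, ‖M31 i j‖^2) + (∑ i, ∑ j, ‖M32 i j‖^2) + (∑ i, ∑ j, ‖M33 i j‖^2) := by
  simp only [blocks3, Fintype.sum_sum_type, Matrix.fromBlocks_apply₁₁, Matrix.fromBlocks_apply₁₂,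
    Matrix.fromBlocks_apply₂₁, Matrix.fromBlocks_apply₂₂, Matrix.fromRows_apply_inl,
    Matrix.fromRows_apply_inr, Matrix.fromCols_apply_inl, Matrix.fromCols_apply_inr,
    Finset.sum_add_distrib]
  ring

lemma frobSq_colUnit {m ℓ : ℕ} (η : ℕ) (C : Matrix (Fin m) (Fin ℓ) 𝕜) :
    ∑ i, ∑ j, ‖colUnit η C i j‖^2 = ∑ i, ∑ j, ‖C i j‖^2 := by
  rw [Fintype.sum_prod_type]
  have h1 : ∀ i1 : Fin (η+1), (∑ i2 : Fin m, ∑ j, ‖colUnit η C (i1, i2) j‖^2)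
      = if i1 = Fin.last η then (∑ i2 : Fin m, ∑ j, ‖C i2 j‖^2) else 0 := by
    intro i1
    by_cases hi : i1 = Fin.last η
    · simp [colUnit, evec, hi, norm_mul, mul_pow, Fin.val_last]
    · have hv : ¬ ((i1 : ℕ) = η) := fun hc => hi (Fin.ext (by simp [hc, Fin.val_last]))
      simp [colUnit, evec, hv, hi]
  rw [Finset.sum_congr rfl (fun i1 _ => h1 i1), Finset.sum_ite_eq' Finset.univ (Fin.last η)]
  simp

lemma frobSq_rowUnit {n ℓ : ℕ} (ε : ℕ) (B : Matrix (Fin ℓ) (Fin n) 𝕜) :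
    ∑ i, ∑ j, ‖rowUnit ε B i j‖^2 = ∑ i, ∑ j, ‖B i j‖^2 := by
  refine Finset.sum_congr rfl fun i _ => ?_
  rw [Fintype.sum_prod_type]
  have h2 : ∀ j1 : Fin (ε+1), (∑ j2, ‖rowUnit ε B i (j1, j2)‖^2)
      = if j1 = Fin.last ε then ∑ j2, ‖B i j2‖^2 else 0 := by
    intro j1
    by_cases hj : j1 = Fin.last ε
    · simp [rowUnit, evec, hj, norm_mul, mul_pow, Fin.val_last]
    · have hv : ¬ ((j1 : ℕ) = ε) := fun hc => hj (Fin.ext (by simp [hc, Fin.val_last]))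
      simp [rowUnit, evec, hv, hj]
  rw [Finset.sum_congr rfl (fun j1 _ => h2 j1), Finset.sum_ite_eq' Finset.univ (Fin.last ε)]
  simp

lemma frobSq_one (ℓ : ℕ) :
    ∑ i, ∑ j, ‖(1 : Matrix (Fin ℓ) (Fin ℓ) 𝕜) i j‖^2 = (ℓ : ℝ) := by
  simp [Matrix.one_apply, apply_ite (fun z : 𝕜 => ‖z‖^2), Finset.sum_ite_eq]

lemma frobSq_zero {p q : Type*} [Fintype p] [Fintype q] :
    ∑ i, ∑ j, ‖(0 : Matrix p q 𝕜) i j‖^2 = 0 := by simp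

lemma sqrt2_le : Real.sqrt 2 ≤ 3/2 := by
  have h := Real.sqrt_le_sqrt (show (2:ℝ) ≤ (3/2)^2 by norm_num)
  rwa [Real.sqrt_sq (by norm_num : (0:ℝ) ≤ 3/2)] at h

lemma sqrt3_le : Real.sqrt 3 ≤ 7/4 := by
  have h := Real.sqrt_le_sqrt (show (3:ℝ) ≤ (7/4)^2 by norm_num)
  rwa [Real.sqrt_sq (by norm_num : (0:ℝ) ≤ 7/4)] at h

end S18
end

set_option maxHeartbeats 1000000

/-- Corollary 4.17. Under the scaling conditions, `K_{S,R}` is bounded by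
`g·t⁵·√(m+n)` (resp. `g·t^{9/2}·√(m+n)`), for a universal constant `g > 0`. -/
theorem statement18 :
    ∃ g : ℝ, 0 < g ∧
      ∀ (𝕜 : Type) [inst : RCLike 𝕜], ∀ (m n ℓ ε η : ℕ),
        0 < m → 0 < n → 0 < ℓ → 1 ≤ max η ε →
        ∀ (A : Matrix (Fin ℓ) (Fin ℓ) 𝕜) (B : Matrix (Fin ℓ) (Fin n) 𝕜)
          (C : Matrix (Fin m) (Fin ℓ) 𝕜)
          (D : Fin (ε + η + 2) → Matrix (Fin m) (Fin n) 𝕜)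
          (Ma Mb : Matrix (Fin (η+1) × Fin m) (Fin (ε+1) × Fin n) 𝕜),
          (∀ x : 𝕜, (LamI 𝕜 η m x)ᵀ * (Ma - x • Mb) * (LamI 𝕜 ε n x) =
            ∑ i, x ^ i.val • D i) →
          max (max (frobNorm A) (frobNorm B))
            (max (frobNorm C) (Real.sqrt (∑ i, frobNorm (D i) ^ 2))) ≤ 1 →
          pFrob (Ma, Mb) ≤ 1 →
          ∀ (α β γ s f₁ f₂ f₃ K : ℝ),
            α = 1 + 2 * (ε : ℝ) * max 1 (specNorm A ^ ε) →
            β = 1 + 2 * (η : ℝ) * max 1 (specNorm A ^ η) →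
            γ = ((ε : ℝ) + (η : ℝ)) / (2 * Real.sqrt 2) →
            s = max (max α β) γ + γ * (β * specNorm B + α * specNorm C) →
            f₁ = 4 * Real.sqrt 2 * s / (2 - Real.sqrt 3) →
            f₂ = Real.sqrt 2 * (4 * (max η ε : ℝ) - 1) / 3 →
            f₃ = Real.sqrt 2 * (1 + 2 * (max η ε : ℝ) * max 1 (specNorm A ^ (max η ε))) →
            K = Real.sqrt (2 * (min (ε + 1) (η + 1) : ℝ)) *
                (1 + f₁ * pSpec (blockKron m n ℓ ε η A B C (Ma, Mb))) *
                (1 + f₂ * pSpec (blockKron m n ℓ ε η A B C (Ma, Mb))) *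
                (1 + f₃ * pSpec (blockKron m n ℓ ε η A B C (Ma, Mb))) *
                pFrob (blockKron m n ℓ ε η A B C (Ma, Mb)) /
                Real.sqrt ((ℓ : ℝ) + frobNorm A ^ 2 + frobNorm B ^ 2 + frobNorm C ^ 2 +
                  ∑ i, frobNorm (D i) ^ 2) →
            (0 < ε ∧ 0 < η →
              K ≤ g * (max η ε : ℝ) ^ 5 * Real.sqrt ((m : ℝ) + (n : ℝ))) ∧
            ((ε = 0 ∨ η = 0) →
              K ≤ g * (max η ε : ℝ) ^ ((9 : ℝ) / 2) * Real.sqrt ((m : ℝ) + (n : ℝ))) := by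
  refine ⟨10^7, by norm_num, ?_⟩
  intro 𝕜 inst m n ℓ ε η hm hn hℓ htmax A B C D Ma Mb _hlam hABC hM
  intro α β γ s f₁ f₂ f₃ K hα hβ hγ hs hf₁ hf₂ hf₃ hK
  classical
  set t : ℝ := (max η ε : ℝ) with ht_def
  have ht1 : (1:ℝ) ≤ t := by rw [ht_def]; exact_mod_cast htmax
  have ht0 : (0:ℝ) ≤ t := by linarith only [ht1]
  have htpos : (0:ℝ) < t := by linarith only [ht1]
  have hηt : (η:ℝ) ≤ t := by rw [ht_def]; exact_mod_cast le_max_left η ε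
  have hεt : (ε:ℝ) ≤ t := by rw [ht_def]; exact_mod_cast le_max_right η ε
  have hη0 : (0:ℝ) ≤ (η:ℝ) := Nat.cast_nonneg η
  have hε0 : (0:ℝ) ≤ (ε:ℝ) := Nat.cast_nonneg ε
  have hm1 : (1:ℝ) ≤ (m:ℝ) := by exact_mod_cast hm
  have hn1 : (1:ℝ) ≤ (n:ℝ) := by exact_mod_cast hn
  have hl1 : (1:ℝ) ≤ (ℓ:ℝ) := by exact_mod_cast hℓ
  have hm0 : (0:ℝ) ≤ (m:ℝ) := by linarith only [hm1]
  have hn0 : (0:ℝ) ≤ (n:ℝ) := by linarith only [hn1]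
  have hmn2 : (2:ℝ) ≤ (m:ℝ) + n := by linarith only [hm1, hn1]
  have hst0 : (0:ℝ) ≤ Real.sqrt t := Real.sqrt_nonneg t
  have hsmn0 : (0:ℝ) ≤ Real.sqrt ((m:ℝ)+n) := Real.sqrt_nonneg _
  -- Frobenius norm bounds for the data
  have hfA : frobNorm A ≤ 1 := (le_max_left _ _).trans ((le_max_left _ _).trans hABC)
  have hfB : frobNorm B ≤ 1 := (le_max_right _ _).trans ((le_max_left _ _).trans hABC)
  have hfC : frobNorm C ≤ 1 := (le_max_left _ _).trans ((le_max_right _ _).trans hABC)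
  have hMab : frobNorm Ma ^ 2 + frobNorm Mb ^ 2 ≤ 1 := by
    have h0 : (0:ℝ) ≤ frobNorm Ma ^ 2 + frobNorm Mb ^ 2 := by positivity
    have h1 : pFrob (Ma, Mb) = Real.sqrt (frobNorm Ma ^ 2 + frobNorm Mb ^ 2) := rfl
    rw [h1] at hM
    nlinarith only [hM, Real.sq_sqrt h0,
      Real.sqrt_nonneg (frobNorm Ma ^ 2 + frobNorm Mb ^ 2)]
  have hMa2 : ∑ i, ∑ j, ‖Ma i j‖^2 ≤ 1 := by
    have he := S18.frobNorm_sq Ma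
    linarith only [he, hMab, sq_nonneg (frobNorm Mb)]
  have hMb2 : ∑ i, ∑ j, ‖Mb i j‖^2 ≤ 1 := by
    have he := S18.frobNorm_sq Mb
    linarith only [he, hMab, sq_nonneg (frobNorm Ma)]
  -- spectral norm bounds of the data
  have hsA : specNorm A ≤ 1 := (S18.specNorm_le_frobNorm A).trans hfA
  have hsB : specNorm B ≤ 1 := (S18.specNorm_le_frobNorm B).trans hfB
  have hsC : specNorm C ≤ 1 := (S18.specNorm_le_frobNorm C).trans hfC
  have hsA0 := S18.specNorm_nonneg A
  have hsB0 := S18.specNorm_nonneg B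
  have hsC0 := S18.specNorm_nonneg C
  -- operator bounds for the blocks of S
  have obMa : S18.ob Ma 1 := S18.ob_mono (S18.ob_frobSq Ma) hMa2
  have obMb : S18.ob Mb 1 := S18.ob_mono (S18.ob_frobSq Mb) hMb2
  have obCU : S18.ob (colUnit η C) 1 := S18.ob_mono (S18.ob_frobSq _)
    (by rw [S18.frobSq_colUnit]; exact S18.frobSq_le_one hfC)
  have obRU : S18.ob (rowUnit ε B) 1 := S18.ob_mono (S18.ob_frobSq _)
    (by rw [S18.frobSq_rowUnit]; exact S18.frobSq_le_one hfB)
  have obA : S18.ob A 1 := S18.ob_mono (S18.ob_frobSq A) (S18.frobSq_le_one hfA)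
  have obSa : S18.ob (blockKron m n ℓ ε η A B C (Ma, Mb)).1 18 := by
    show S18.ob (blocks3 Ma (colUnit η C) ((Ek 𝕜 η)ᵀ ⊗ₖ (1 : Matrix (Fin m) (Fin m) 𝕜))
      (rowUnit ε B) A 0 (Ek 𝕜 ε ⊗ₖ (1 : Matrix (Fin n) (Fin n) 𝕜)) 0 0) 18
    exact S18.ob_mono (S18.ob_blocks3
      zero_le_one zero_le_one zero_le_one zero_le_one zero_le_one le_rfl zero_le_one le_rfl le_rfl
      obMa obCU (S18.sel_EkT η m).1 obRU obA (S18.ob_zero le_rfl) (S18.sel_Ek ε n).1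
      (S18.ob_zero le_rfl) (S18.ob_zero le_rfl)) (by norm_num)
  have obSb : S18.ob (blockKron m n ℓ ε η A B C (Ma, Mb)).2 12 := by
    show S18.ob (blocks3 Mb 0 ((Fk 𝕜 η)ᵀ ⊗ₖ (1 : Matrix (Fin m) (Fin m) 𝕜))
      0 1 0 (Fk 𝕜 ε ⊗ₖ (1 : Matrix (Fin n) (Fin n) 𝕜)) 0 0) 12
    exact S18.ob_mono (S18.ob_blocks3
      zero_le_one le_rfl zero_le_one le_rfl zero_le_one le_rfl zero_le_one le_rfl le_rfl
      obMb (S18.ob_zero le_rfl) (S18.sel_FkT η m).1 (S18.ob_zero le_rfl) S18.ob_one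
      (S18.ob_zero le_rfl) (S18.sel_Fk ε n).1 (S18.ob_zero le_rfl) (S18.ob_zero le_rfl))
      (by norm_num)
  -- spectral norm of the pencil S
  have hsSa : specNorm (blockKron m n ℓ ε η A B C (Ma, Mb)).1 ≤ Real.sqrt 18 :=
    S18.specNorm_le_of_ob _ (by norm_num) obSa
  have hsSb : specNorm (blockKron m n ℓ ε η A B C (Ma, Mb)).2 ≤ Real.sqrt 12 :=
    S18.specNorm_le_of_ob _ (by norm_num) obSb
  set P := pSpec (blockKron m n ℓ ε η A B C (Ma, Mb)) with hP_def
  have hP0 : 0 ≤ P := Real.sqrt_nonneg _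
  have hP6 : P ≤ 6 := by
    have e1 : specNorm (blockKron m n ℓ ε η A B C (Ma, Mb)).1 ^ 2 ≤ 18 := by
      nlinarith only [hsSa, S18.specNorm_nonneg (blockKron m n ℓ ε η A B C (Ma, Mb)).1,
        Real.sq_sqrt (show (0:ℝ) ≤ 18 by norm_num), Real.sqrt_nonneg (18:ℝ)]
    have e2 : specNorm (blockKron m n ℓ ε η A B C (Ma, Mb)).2 ^ 2 ≤ 12 := by
      nlinarith only [hsSb, S18.specNorm_nonneg (blockKron m n ℓ ε η A B C (Ma, Mb)).2,
        Real.sq_sqrt (show (0:ℝ) ≤ 12 by norm_num), Real.sqrt_nonneg (12:ℝ)]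
    have e3 : P ≤ Real.sqrt 36 := by
      rw [hP_def]
      exact Real.sqrt_le_sqrt (by linarith only [e1, e2])
    rwa [show (36:ℝ) = 6^2 by norm_num, Real.sqrt_sq (by norm_num : (0:ℝ) ≤ 6)] at e3
  -- Frobenius norm of the pencil S
  set F := pFrob (blockKron m n ℓ ε η A B C (Ma, Mb)) with hF_def
  have hF0 : 0 ≤ F := Real.sqrt_nonneg _
  have c13a : ∑ i, ∑ j, ‖((Ek 𝕜 η)ᵀ ⊗ₖ (1 : Matrix (Fin m) (Fin m) 𝕜)) i j‖^2
      ≤ ((η:ℝ)+1) * m := by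
    refine (S18.rows_to_frobSq (S18.sel_EkT η m).2).trans (le_of_eq ?_)
    rw [Fintype.card_prod, Fintype.card_fin, Fintype.card_fin]; push_cast; ring
  have c13b : ∑ i, ∑ j, ‖((Fk 𝕜 η)ᵀ ⊗ₖ (1 : Matrix (Fin m) (Fin m) 𝕜)) i j‖^2
      ≤ ((η:ℝ)+1) * m := by
    refine (S18.rows_to_frobSq (S18.sel_FkT η m).2).trans (le_of_eq ?_)
    rw [Fintype.card_prod, Fintype.card_fin, Fintype.card_fin]; push_cast; ring
  have c31a : ∑ i, ∑ j, ‖((Ek 𝕜 ε) ⊗ₖ (1 : Matrix (Fin n) (Fin n) 𝕜)) i j‖^2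
      ≤ (ε:ℝ) * n := by
    refine (S18.rows_to_frobSq (S18.sel_Ek ε n).2).trans (le_of_eq ?_)
    rw [Fintype.card_prod, Fintype.card_fin, Fintype.card_fin]; push_cast; ring
  have c31b : ∑ i, ∑ j, ‖((Fk 𝕜 ε) ⊗ₖ (1 : Matrix (Fin n) (Fin n) 𝕜)) i j‖^2
      ≤ (ε:ℝ) * n := by
    refine (S18.rows_to_frobSq (S18.sel_Fk ε n).2).trans (le_of_eq ?_)
    rw [Fintype.card_prod, Fintype.card_fin, Fintype.card_fin]; push_cast; ring
  have hFa2 : frobNorm (blockKron m n ℓ ε η A B C (Ma, Mb)).1 ^ 2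
      ≤ 4 + ((η:ℝ)+1)*m + (ε:ℝ)*n := by
    rw [S18.frobNorm_sq]
    show ∑ i, ∑ j, ‖blocks3 Ma (colUnit η C) ((Ek 𝕜 η)ᵀ ⊗ₖ (1 : Matrix (Fin m) (Fin m) 𝕜))
      (rowUnit ε B) A 0 (Ek 𝕜 ε ⊗ₖ (1 : Matrix (Fin n) (Fin n) 𝕜)) 0 0 i j‖^2 ≤ _
    rw [S18.frobSq_blocks3, S18.frobSq_colUnit, S18.frobSq_rowUnit, S18.frobSq_zero,
      S18.frobSq_zero, S18.frobSq_zero]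
    have k1 := S18.frobSq_le_one hfC
    have k2 := S18.frobSq_le_one hfB
    have k3 := S18.frobSq_le_one hfA
    linarith only [c13a, c31a, hMa2, k1, k2, k3]
  have hFb2 : frobNorm (blockKron m n ℓ ε η A B C (Ma, Mb)).2 ^ 2
      ≤ 1 + ((η:ℝ)+1)*m + (ℓ:ℝ) + (ε:ℝ)*n := by
    rw [S18.frobNorm_sq]
    show ∑ i, ∑ j, ‖blocks3 Mb 0 ((Fk 𝕜 η)ᵀ ⊗ₖ (1 : Matrix (Fin m) (Fin m) 𝕜))
      0 1 0 (Fk 𝕜 ε ⊗ₖ (1 : Matrix (Fin n) (Fin n) 𝕜)) 0 0 i j‖^2 ≤ _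
    rw [S18.frobSq_blocks3, S18.frobSq_zero, S18.frobSq_zero, S18.frobSq_zero, S18.frobSq_zero,
      S18.frobSq_zero, S18.frobSq_one]
    linarith only [c13b, c31b, hMb2]
  have hF2 : F^2 ≤ 5 + (ℓ:ℝ) + 2*(((η:ℝ)+1)*m + (ε:ℝ)*n) := by
    have e0 : F = Real.sqrt (frobNorm (blockKron m n ℓ ε η A B C (Ma, Mb)).1 ^ 2 +
        frobNorm (blockKron m n ℓ ε η A B C (Ma, Mb)).2 ^ 2) := hF_def
    have hrad : (0:ℝ) ≤ frobNorm (blockKron m n ℓ ε η A B C (Ma, Mb)).1 ^ 2 +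
        frobNorm (blockKron m n ℓ ε η A B C (Ma, Mb)).2 ^ 2 := by positivity
    rw [e0, Real.sq_sqrt hrad]
    linarith only [hFa2, hFb2]
  -- denominator
  set Dden := Real.sqrt ((ℓ:ℝ) + frobNorm A ^ 2 + frobNorm B ^ 2 + frobNorm C ^ 2 +
    ∑ i, frobNorm (D i) ^ 2) with hD_def
  have hDsum0 : (0:ℝ) ≤ ∑ i, frobNorm (D i) ^ 2 :=
    Finset.sum_nonneg fun i _ => sq_nonneg _
  have hDrad0 : (0:ℝ) ≤ (ℓ:ℝ) + frobNorm A ^ 2 + frobNorm B ^ 2 + frobNorm C ^ 2 +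
      ∑ i, frobNorm (D i) ^ 2 := by
    have hc : (0:ℝ) ≤ (ℓ:ℝ) := Nat.cast_nonneg ℓ
    linarith only [hc, hDsum0, sq_nonneg (frobNorm A), sq_nonneg (frobNorm B),
      sq_nonneg (frobNorm C)]
  have hD2 : Dden ^ 2 = (ℓ:ℝ) + frobNorm A ^ 2 + frobNorm B ^ 2 + frobNorm C ^ 2 +
      ∑ i, frobNorm (D i) ^ 2 := Real.sq_sqrt hDrad0
  have hDl : (ℓ:ℝ) ≤ Dden ^ 2 := by
    rw [hD2]
    linarith only [hDsum0, sq_nonneg (frobNorm A), sq_nonneg (frobNorm B), sq_nonneg (frobNorm C)]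
  have hD1 : 1 ≤ Dden := by
    have hrad : (1:ℝ) ≤ (ℓ:ℝ) + frobNorm A ^ 2 + frobNorm B ^ 2 + frobNorm C ^ 2 +
        ∑ i, frobNorm (D i) ^ 2 := by
      linarith only [hl1, hDsum0, sq_nonneg (frobNorm A), sq_nonneg (frobNorm B),
        sq_nonneg (frobNorm C)]
    rw [hD_def]
    calc (1:ℝ) = Real.sqrt 1 := Real.sqrt_one.symm
      _ ≤ _ := Real.sqrt_le_sqrt hrad
  have hDpos : (0:ℝ) < Dden := lt_of_lt_of_le one_pos hD1
  have hD0 : (0:ℝ) ≤ Dden := hDpos.le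
  have hD1sq : 1 ≤ Dden ^ 2 := by nlinarith only [hD1, hD0]
  have hmint : (min (ε + 1) (η + 1) : ℝ) ≤ 2*t := by
    have hnat : min (ε + 1) (η + 1) ≤ 2 * max η ε := by omega
    rw [ht_def]; exact_mod_cast hnat
  clear_value t P F Dden
  -- F ≤ 3 Dden √t √(m+n)
  have htm : (2:ℝ) ≤ t * ((m:ℝ)+n) := by nlinarith only [ht1, hmn2, hm0, hn0]
  have htm0 : (0:ℝ) ≤ t * ((m:ℝ)+n) := by linarith only [htm]
  have hFD : F ≤ 3 * Dden * (Real.sqrt t * Real.sqrt ((m:ℝ)+n)) := by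
    have hRHS0 : (0:ℝ) ≤ 3 * Dden * (Real.sqrt t * Real.sqrt ((m:ℝ)+n)) :=
      mul_nonneg (mul_nonneg (by norm_num) hD0) (mul_nonneg hst0 hsmn0)
    have hsq : F^2 ≤ (3 * Dden * (Real.sqrt t * Real.sqrt ((m:ℝ)+n)))^2 := by
      have e : (3 * Dden * (Real.sqrt t * Real.sqrt ((m:ℝ)+n)))^2
          = 9 * Dden^2 * (t * ((m:ℝ)+n)) := by
        rw [mul_pow, mul_pow, mul_pow, Real.sq_sqrt ht0,
          Real.sq_sqrt (show (0:ℝ) ≤ (m:ℝ)+n by positivity)]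
        ring
      rw [e]
      have p1 : (0:ℝ) ≤ (2*t - ((η:ℝ)+1)) * m :=
        mul_nonneg (by linarith only [hηt, ht1]) hm0
      have p2 : (0:ℝ) ≤ (t - (ε:ℝ)) * n := mul_nonneg (by linarith only [hεt]) hn0
      have p3 : (0:ℝ) ≤ t * n := mul_nonneg ht0 hn0
      have h4 : 2*(((η:ℝ)+1)*m + (ε:ℝ)*n) ≤ 4*(t*((m:ℝ)+n)) := by nlinarith only [p1, p2, p3]
      have h5 : (ℓ:ℝ) * 2 ≤ Dden^2 * (t*((m:ℝ)+n)) :=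
        mul_le_mul hDl htm (by norm_num) (sq_nonneg Dden)
      have h6 : (1:ℝ) * 2 ≤ Dden^2 * (t*((m:ℝ)+n)) :=
        mul_le_mul hD1sq htm (by norm_num) (sq_nonneg Dden)
      have p4 : (0:ℝ) ≤ (Dden^2 - 1) * (t*((m:ℝ)+n)) :=
        mul_nonneg (by linarith only [hD1sq]) htm0
      have h7 : 4*(t*((m:ℝ)+n)) ≤ 4*(Dden^2*(t*((m:ℝ)+n))) := by nlinarith only [p4]
      linarith only [hF2, h4, h5, h6, h7]
    have h8 := Real.sqrt_le_sqrt hsq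
    rwa [Real.sqrt_sq hF0, Real.sqrt_sq hRHS0] at h8
  -- bounds on the auxiliary constants
  have hpowA : ∀ k : ℕ, specNorm A ^ k ≤ 1 := fun k => pow_le_one₀ hsA0 hsA
  have hαle : α ≤ 3*t := by
    rw [hα, max_eq_left (hpowA ε)]; linarith only [hεt, ht1]
  have hα0 : 0 ≤ α := by rw [hα, max_eq_left (hpowA ε)]; linarith only [hε0]
  have hβle : β ≤ 3*t := by
    rw [hβ, max_eq_left (hpowA η)]; linarith only [hηt, ht1]
  have hβ0 : 0 ≤ β := by rw [hβ, max_eq_left (hpowA η)]; linarith only [hη0]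
  have hsqrt2_1 : (1:ℝ) ≤ Real.sqrt 2 := by
    rw [show (1:ℝ) = Real.sqrt 1 from Real.sqrt_one.symm]
    exact Real.sqrt_le_sqrt (by norm_num)
  have hγle : γ ≤ t := by
    rw [hγ]
    have hd : ((ε:ℝ)+η) / (2 * Real.sqrt 2) ≤ (2*t) / 2 :=
      div_le_div₀ (by linarith only [ht0]) (by linarith only [hεt, hηt]) (by norm_num)
        (by linarith only [hsqrt2_1])
    linarith only [hd]
  have hγ0 : 0 ≤ γ := by
    rw [hγ]
    exact div_nonneg (by linarith only [hε0, hη0]) (by linarith only [hsqrt2_1])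
  have hBC0 : 0 ≤ β * specNorm B + α * specNorm C :=
    add_nonneg (mul_nonneg hβ0 hsB0) (mul_nonneg hα0 hsC0)
  have hsle : s ≤ 9*t^2 := by
    rw [hs]
    have h1 : max (max α β) γ ≤ 3*t := max_le (max_le hαle hβle) (by linarith only [hγle, ht0])
    have h2a := mul_le_mul hβle hsB hsB0 (by linarith only [ht0])
    have h2b := mul_le_mul hαle hsC hsC0 (by linarith only [ht0])
    have h3 : γ * (β * specNorm B + α * specNorm C) ≤ t * (3*t + 3*t) :=
      mul_le_mul hγle (by linarith only [h2a, h2b]) hBC0 ht0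
    nlinarith only [h1, h3, ht1, sq_nonneg (t-1)]
  have hs0 : 0 ≤ s := by
    rw [hs]
    have h1 : (0:ℝ) ≤ max (max α β) γ := le_trans hγ0 (le_max_right _ _)
    have h2 := mul_nonneg hγ0 hBC0
    linarith only [h1, h2]
  have hf₁le : f₁ ≤ 216*t^2 := by
    rw [hf₁]
    have h1 : 4 * Real.sqrt 2 ≤ 6 := by linarith only [S18.sqrt2_le]
    have h2 := mul_le_mul h1 hsle hs0 (by norm_num)
    have hnum : 4 * Real.sqrt 2 * s ≤ 54*t^2 := by linarith only [h2]
    have hden : (1:ℝ)/4 ≤ 2 - Real.sqrt 3 := by linarith only [S18.sqrt3_le]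
    have hdd : 4 * Real.sqrt 2 * s / (2 - Real.sqrt 3) ≤ (54*t^2) / (1/4) :=
      div_le_div₀ (by positivity) hnum (by norm_num) hden
    calc 4 * Real.sqrt 2 * s / (2 - Real.sqrt 3) ≤ (54*t^2) / (1/4) := hdd
      _ = 216*t^2 := by ring
  have hf₁0 : 0 ≤ f₁ := by
    rw [hf₁]
    apply div_nonneg
    · have := Real.sqrt_nonneg 2
      nlinarith only [this, hs0]
    · linarith only [S18.sqrt3_le]
  have hf₂le : f₂ ≤ 2*t := by
    rw [hf₂, div_le_iff₀ (by norm_num : (0:ℝ) < 3)]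
    have h1 : Real.sqrt 2 * (4*t - 1) ≤ (3/2) * (4*t) :=
      mul_le_mul S18.sqrt2_le (by linarith only []) (by linarith only [ht1]) (by norm_num)
    linarith only [h1]
  have hf₂0 : 0 ≤ f₂ := by
    rw [hf₂]
    exact div_nonneg (mul_nonneg (Real.sqrt_nonneg 2) (by linarith only [ht1])) (by norm_num)
  have hf₃le : f₃ ≤ 5*t := by
    rw [hf₃, max_eq_left (hpowA (max η ε))]
    have h1 : Real.sqrt 2 * (1 + 2*t*1) ≤ (3/2) * (3*t) :=
      mul_le_mul S18.sqrt2_le (by linarith only [ht1]) (by linarith only [ht0]) (by norm_num)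
    have h2 : (1:ℝ) + 2*t*1 = 1 + 2*t := by ring
    linarith only [h1, ht0]
  have hf₃0 : 0 ≤ f₃ := by
    rw [hf₃, max_eq_left (hpowA (max η ε))]
    exact mul_nonneg (Real.sqrt_nonneg 2) (by linarith only [ht0])
  -- the three factors
  have hX1 : 1 + f₁*P ≤ 1300*t^2 := by
    have hmul := mul_le_mul hf₁le hP6 hP0 (by positivity)
    linarith only [hmul, ht1, sq_nonneg (t-1)]
  have hX1' : 0 ≤ 1 + f₁*P := by
    have := mul_nonneg hf₁0 hP0; linarith only [this]
  have hX2 : 1 + f₂*P ≤ 13*t := by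
    have hmul := mul_le_mul hf₂le hP6 hP0 (by linarith only [ht0])
    linarith only [hmul, ht1]
  have hX2'' : 0 ≤ 1 + f₂*P := by
    have := mul_nonneg hf₂0 hP0; linarith only [this]
  have hX3 : 1 + f₃*P ≤ 31*t := by
    have hmul := mul_le_mul hf₃le hP6 hP0 (by linarith only [ht0])
    linarith only [hmul, ht1]
  have hX3' : 0 ≤ 1 + f₃*P := by
    have := mul_nonneg hf₃0 hP0; linarith only [this]
  rw [hK]
  constructor
  · rintro ⟨hεpos, hηpos⟩
    rw [div_le_iff₀ hDpos]
    have hmin : Real.sqrt (2 * (min (ε + 1) (η + 1) : ℝ)) ≤ 2*Real.sqrt t := by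
      calc Real.sqrt (2 * (min (ε + 1) (η + 1) : ℝ)) ≤ Real.sqrt (2^2*t) :=
            Real.sqrt_le_sqrt (by linarith only [hmint])
        _ = 2*Real.sqrt t := by
            rw [Real.sqrt_mul (by norm_num) t, Real.sqrt_sq (by norm_num : (0:ℝ) ≤ 2)]
    have r1 : (0:ℝ) ≤ 2*Real.sqrt t * (1300*t^2) := by positivity
    have r2 : (0:ℝ) ≤ 2*Real.sqrt t * (1300*t^2) * (13*t) :=
      mul_nonneg r1 (by linarith only [ht0])
    have r3 : (0:ℝ) ≤ 2*Real.sqrt t * (1300*t^2) * (13*t) * (31*t) :=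
      mul_nonneg r2 (by linarith only [ht0])
    have s1 := mul_le_mul hmin hX1 hX1' (by positivity)
    have s2 := mul_le_mul s1 hX2 hX2'' r1
    have s3 := mul_le_mul s2 hX3 hX3' r2
    have s4 := mul_le_mul s3 hFD hF0 r3
    have h9 : (0:ℝ) ≤ t^5 * Real.sqrt ((m:ℝ)+n) * Dden :=
      mul_nonneg (mul_nonneg (pow_nonneg ht0 5) hsmn0) hD0
    calc Real.sqrt (2 * (min (ε + 1) (η + 1) : ℝ)) * (1 + f₁ * P) * (1 + f₂ * P)
          * (1 + f₃ * P) * F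
        ≤ 2*Real.sqrt t * (1300*t^2) * (13*t) * (31*t)
            * (3 * Dden * (Real.sqrt t * Real.sqrt ((m:ℝ)+n))) := s4
      _ = 3143400 * (Real.sqrt t * Real.sqrt t) * t^4 * Real.sqrt ((m:ℝ)+n) * Dden := by ring
      _ = 3143400 * t^5 * Real.sqrt ((m:ℝ)+n) * Dden := by
            rw [Real.mul_self_sqrt ht0]; ring
      _ ≤ 10^7 * t^5 * Real.sqrt ((m:ℝ)+n) * Dden := by
            nlinarith only [h9]
  · intro hcase
    rw [div_le_iff₀ hDpos]
    have hnat : min (ε + 1) (η + 1) = 1 := by omega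
    have hμ : (min (ε + 1) (η + 1) : ℝ) = 1 := by exact_mod_cast hnat
    have hmin : Real.sqrt (2 * (min (ε + 1) (η + 1) : ℝ)) ≤ 3/2 := by
      rw [hμ, mul_one]; exact S18.sqrt2_le
    have r1 : (0:ℝ) ≤ (3:ℝ)/2 * (1300*t^2) := by positivity
    have r2 : (0:ℝ) ≤ (3:ℝ)/2 * (1300*t^2) * (13*t) :=
      mul_nonneg r1 (by linarith only [ht0])
    have r3 : (0:ℝ) ≤ (3:ℝ)/2 * (1300*t^2) * (13*t) * (31*t) :=
      mul_nonneg r2 (by linarith only [ht0])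
    have s1 := mul_le_mul hmin hX1 hX1' (by norm_num)
    have s2 := mul_le_mul s1 hX2 hX2'' r1
    have s3 := mul_le_mul s2 hX3 hX3' r2
    have s4 := mul_le_mul s3 hFD hF0 r3
    have hrpow : t ^ ((9:ℝ)/2) = t^4 * Real.sqrt t := by
      rw [show (9:ℝ)/2 = ((4:ℕ):ℝ) + (1/2:ℝ) by norm_num, Real.rpow_add htpos,
        Real.rpow_natCast, Real.sqrt_eq_rpow]
    have h9 : (0:ℝ) ≤ t^((9:ℝ)/2) * Real.sqrt ((m:ℝ)+n) * Dden := by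
      rw [hrpow]
      exact mul_nonneg (mul_nonneg (mul_nonneg (pow_nonneg ht0 4) hst0) hsmn0) hD0
    calc Real.sqrt (2 * (min (ε + 1) (η + 1) : ℝ)) * (1 + f₁ * P) * (1 + f₂ * P)
          * (1 + f₃ * P) * F
        ≤ 3/2 * (1300*t^2) * (13*t) * (31*t)
            * (3 * Dden * (Real.sqrt t * Real.sqrt ((m:ℝ)+n))) := s4
      _ = 2357550 * (t^4 * Real.sqrt t) * Real.sqrt ((m:ℝ)+n) * Dden := by ring
      _ = 2357550 * t^((9:ℝ)/2) * Real.sqrt ((m:ℝ)+n) * Dden := by rw [hrpow]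
      _ ≤ 10^7 * t^((9:ℝ)/2) * Real.sqrt ((m:ℝ)+n) * Dden := by
            nlinarith only [h9]
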